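/- Let a = 2cos(π/8). Then β = 184a³ + 340a² − 108a − 199 satisfies β > 1 and is a Pisot number. -/

import Mathlib

/-- A Pisot number: a real algebraic integer `β > 1` all of whose Galois conjugates
(the other complex roots of its minimal polynomial over `ℚ`) have modulus `< 1`. -/
def IsPisot (β : ℝ) : Prop :=
  1 < β ∧ IsIntegral ℤ β ∧
    ∀ z : ℂ, z ≠ (β : ℂ) → Polynomial.aeval z (minpoly ℚ β) = 0 → ‖z‖ < 1

/-- `a = 2 cos (π/8)`. -/
noncomputable def a8 : ℝ := 2 * Real.cos (Real.pi / 8)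

set_option maxHeartbeats 1000000 in
open Polynomial Real in
theorem stmt_17 :
    1 < 184 * a8 ^ 3 + 340 * a8 ^ 2 - 108 * a8 - 199 ∧
    IsPisot (184 * a8 ^ 3 + 340 * a8 ^ 2 - 108 * a8 - 199) := by
  set r : ℝ := Real.sqrt 2 with hrdef
  have hr : r ^ 2 = 2 := Real.sq_sqrt (by norm_num)
  have hrpos : 0 < r := Real.sqrt_pos.2 (by norm_num)
  have ha : a8 ^ 2 = 2 + r := by
    have h := Real.cos_sq (π / 8)
    have h2 : 2 * (π/8) = π/4 := by ring
    rw [h2, Real.cos_pi_div_four] at h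
    unfold a8; nlinarith [h]
  have hapos : 0 < a8 := by
    unfold a8
    have : 0 < Real.cos (π/8) := by
      apply Real.cos_pos_of_mem_Ioo
      constructor <;> nlinarith [Real.pi_pos]
    linarith
  -- numeric bounds
  have hr1 : 1.41421 < r := by nlinarith
  have hr2 : r < 1.41422 := by nlinarith
  have hA1 : 1.8477 < a8 := by nlinarith
  have hA2 : a8 < 1.8478 := by nlinarith
  have hm1 : 2.613 < r * a8 := by nlinarith [mul_pos (sub_pos.2 hr1) (sub_pos.2 hA1)]
  have hm2 : r * a8 < 2.6132 := by
    nlinarith [mul_pos (sub_pos.2 hr2) (sub_pos.2 hA2), mul_pos (sub_pos.2 hr1) (sub_pos.2 hA1)]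
  -- the four conjugates
  set b0 : ℝ := 481 + 340*r + (260 + 184*r) * a8 with hb0def
  set b1 : ℝ := 481 + 340*r - (260 + 184*r) * a8 with hb1def
  set b2 : ℝ := 481 - 340*r + (444*r - 628) * a8 with hb2def
  set b3 : ℝ := 481 - 340*r - (444*r - 628) * a8 with hb3def
  have hb0 : 184 * a8 ^ 3 + 340 * a8 ^ 2 - 108 * a8 - 199 = b0 := by
    rw [hb0def]; linear_combination (184*a8 + 340) * ha
  have hbig : 1 < 184 * a8 ^ 3 + 340 * a8 ^ 2 - 108 * a8 - 199 := by
    rw [hb0, hb0def]; nlinarith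
  -- products and sums
  have hp01 : b0 * b1 = 577 + 408*r := by
    rw [hb0def, hb1def]
    linear_combination (-(260+184*r)^2) * ha + (-33856*r - 47792) * hr
  have hp23 : b2 * b3 = 577 - 408*r := by
    rw [hb2def, hb3def]
    linear_combination (-(444*r-628)^2) * ha + (-197136*r + 278992) * hr
  have hs01 : b0 + b1 = 962 + 680*r := by rw [hb0def, hb1def]; ring
  have hs23 : b2 + b3 = 962 - 680*r := by rw [hb2def, hb3def]; ring
  -- b0 is a root of the quartic
  have hq0 : b0^4 - 1924*b0^3 + 1798*b0^2 - 388*b0 + 1 = 0 := by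
    linear_combination ((b0^2 - (962 - 680*r)*b0 + (577 - 408*r)) * b0) * hs01 -
      (b0^2 - (962 - 680*r)*b0 + (577 - 408*r)) * hp01 +
      (462400*b0^2 - 554880*b0 + 166464) * hr
  refine ⟨hbig, hbig, ?_, ?_⟩
  · -- integrality
    have hint_a : IsIntegral ℤ a8 := by
      refine ⟨X^4 - 4*X^2 + 2, by monicity!, ?_⟩
      rw [← Polynomial.aeval_def]
      have heval : (Polynomial.aeval a8) ((X:ℤ[X])^4 - 4*X^2 + 2) = a8^4 - 4*a8^2 + 2 := by
        simp [map_ofNat]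
      rw [heval]
      linear_combination (a8^2 + r - 2) * ha + hr
    have hc : ∀ n : ℤ, IsIntegral ℤ ((n:ℝ)) := fun n => by
      simpa using isIntegral_algebraMap (R := ℤ) (A := ℝ) (x := n)
    have h1 : IsIntegral ℤ (184 * a8 ^ 3 + 340 * a8 ^ 2 - 108 * a8 - 199) := by
      have := (((hc 184).mul (hint_a.pow 3)).add ((hc 340).mul (hint_a.pow 2))).sub
        (((hc 108).mul hint_a).add (hc 199))
      convert this using 1
      · rfl
      · push_cast; ring
    exact h1
  · -- conjugates
    intro z hzne hzroot
    set β : ℝ := 184 * a8 ^ 3 + 340 * a8 ^ 2 - 108 * a8 - 199 with hβ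
    -- minpoly divides the quartic
    have hq : (Polynomial.aeval β) ((X:ℚ[X])^4 - 1924*X^3 + 1798*X^2 - 388*X + 1) = 0 := by
      have heval : (Polynomial.aeval β) ((X:ℚ[X])^4 - 1924*X^3 + 1798*X^2 - 388*X + 1)
          = β^4 - 1924*β^3 + 1798*β^2 - 388*β + 1 := by
        simp [map_ofNat]
      rw [heval, show β = b0 from hb0]
      linear_combination hq0
    obtain ⟨c, hc⟩ := minpoly.dvd ℚ β hq
    have hz : z^4 - 1924*z^3 + 1798*z^2 - 388*z + 1 = 0 := by
      have h0 : (Polynomial.aeval z) ((X:ℚ[X])^4 - 1924*X^3 + 1798*X^2 - 388*X + 1) = 0 := by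
        rw [hc, map_mul, hzroot, zero_mul]
      have heval : (Polynomial.aeval z) ((X:ℚ[X])^4 - 1924*X^3 + 1798*X^2 - 388*X + 1)
          = z^4 - 1924*z^3 + 1798*z^2 - 388*z + 1 := by
        simp [map_ofNat]
      rwa [heval] at h0
    -- factorization over ℂ
    have cs01 : ((b0:ℂ)) + (b1:ℂ) = 962 + 680*(r:ℂ) := by
      have := congrArg (Complex.ofReal) hs01; push_cast at this; exact this
    have cp01 : ((b0:ℂ)) * (b1:ℂ) = 577 + 408*(r:ℂ) := by
      have := congrArg (Complex.ofReal) hp01; push_cast at this; exact this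
    have cs23 : ((b2:ℂ)) + (b3:ℂ) = 962 - 680*(r:ℂ) := by
      have := congrArg (Complex.ofReal) hs23; push_cast at this; exact this
    have cp23 : ((b2:ℂ)) * (b3:ℂ) = 577 - 408*(r:ℂ) := by
      have := congrArg (Complex.ofReal) hp23; push_cast at this; exact this
    have cR : ((r:ℂ))^2 = 2 := by exact_mod_cast congrArg (Complex.ofReal) hr
    have hfact : (z - (b0:ℂ)) * (z - (b1:ℂ)) * ((z - (b2:ℂ)) * (z - (b3:ℂ))) = 0 := by
      linear_combination (-z*((z-(b2:ℂ))*(z-(b3:ℂ)))) * cs01 + ((z-(b2:ℂ))*(z-(b3:ℂ))) * cp01 +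
        (-z*(z^2 - (962+680*(r:ℂ))*z + (577+408*(r:ℂ)))) * cs23 +
        (z^2 - (962+680*(r:ℂ))*z + (577+408*(r:ℂ))) * cp23 +
        (-462400*z^2 + 554880*z - 166464) * cR + hz
    have habs : ∀ x : ℝ, -1 < x → x < 1 → z = (x:ℂ) → ‖z‖ < 1 := by
      intro x h1 h2 hzx
      rw [hzx, Complex.norm_real, Real.norm_eq_abs, abs_lt]; exact ⟨h1, h2⟩
    rcases mul_eq_zero.1 hfact with h | h
    · rcases mul_eq_zero.1 h with h' | h'
      · exact absurd (by rw [sub_eq_zero.1 h']; exact_mod_cast hb0.symm) hzne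
      · refine habs b1 ?_ ?_ (sub_eq_zero.1 h') <;> · rw [hb1def]; linarith [hr1, hr2, hA1, hA2, hm1, hm2]
    · rcases mul_eq_zero.1 h with h' | h'
      · refine habs b2 ?_ ?_ (sub_eq_zero.1 h') <;> · rw [hb2def]; linarith [hr1, hr2, hA1, hA2, hm1, hm2]
      · refine habs b3 ?_ ?_ (sub_eq_zero.1 h') <;> · rw [hb3def]; linarith [hr1, hr2, hA1, hA2, hm1, hm2]
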